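/- Let Ω be a compact metric space equipped with a finite Borel measure μ, let k : Ω × Ω → ℝ be continuous, x₁, …, xₙ ∈ Ω, and let G ∈ ℝ^{n×n} with G_{ij} = k(x_i, x_j) be invertible. Let f : Ω → ℝ be continuous, set Y = (f(x₁), …, f(xₙ)), and for a continuous g : Ω → ℝ define S(g)(x) := g(x) + Σᵢ,ⱼ k(x, xᵢ)(G⁻¹)_{ij}(Yⱼ − g(xⱼ)) and T(g)(x) := Σᵢ,ⱼ k(x, xᵢ)(G⁻¹)_{ij} g(xⱼ). Let (Ω', ℱ, P) be a probability space and W : Ω' → C(Ω, ℝ) a Bochner-integrable random continuous function (C(Ω, ℝ) with the sup norm) with E[W] = 0 and E[‖W‖_∞²] < ∞. Then E[‖S(W) − f‖²_{L²(μ)}] = ‖S(0) − f‖²_{L²(μ)} + E[‖W − T(W)‖²_{L²(μ)}], where ‖g‖²_{L²(μ)} = ∫_Ω g(x)² dμ(x). In particular E[‖S(W) − f‖²_{L²(μ)}] ≥ ‖S(0) − f‖²_{L²(μ)}. -/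

import Mathlib

open Matrix MeasureTheory

/-- Generalization-error decomposition for a random nonzero initial output in the NTK
regime: for the trained output `S(g) = g + k(·,X)G⁻¹(Y - g(X))` and
`T(g) = k(·,X)G⁻¹ g(X)`, a Bochner-mean-zero random continuous initial output `W` with
square-integrable sup norm satisfies
`E‖S(W) - f‖²_{L²(μ)} = ‖S(0) - f‖²_{L²(μ)} + E‖W - T(W)‖²_{L²(μ)}`, hence
`E‖S(W) - f‖²_{L²(μ)} ≥ ‖S(0) - f‖²_{L²(μ)}`. -/
theorem stmt11 {Ω : Type*} [MetricSpace Ω] [CompactSpace Ω]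
    [MeasurableSpace Ω] [BorelSpace Ω]
    (μ : Measure Ω) [IsFiniteMeasure μ]
    {n : ℕ} (k : Ω → Ω → ℝ)
    (hk : Continuous fun p : Ω × Ω => k p.1 p.2)
    (x : Fin n → Ω)
    (G : Matrix (Fin n) (Fin n) ℝ) (hG : ∀ i j, G i j = k (x i) (x j))
    (hGinv : IsUnit G)
    (f : Ω → ℝ) (hf : Continuous f)
    (S T : C(Ω, ℝ) → Ω → ℝ)
    (hS : ∀ (g : C(Ω, ℝ)) (x' : Ω),
      S g x' = g x' + ∑ i, ∑ j, k x' (x i) * G⁻¹ i j * (f (x j) - g (x j)))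
    (hT : ∀ (g : C(Ω, ℝ)) (x' : Ω),
      T g x' = ∑ i, ∑ j, k x' (x i) * G⁻¹ i j * g (x j))
    {Ω' : Type*} [MeasurableSpace Ω']
    (P : Measure Ω') [IsProbabilityMeasure P]
    (W : Ω' → C(Ω, ℝ)) (hWint : Integrable W P)
    (hWmean : (∫ ω, W ω ∂P) = 0)
    (hWsq : Integrable (fun ω => ‖W ω‖ ^ 2) P) :
    (∫ ω, (∫ x', (S (W ω) x' - f x') ^ 2 ∂μ) ∂P)
      = (∫ x', (S 0 x' - f x') ^ 2 ∂μ)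
        + ∫ ω, (∫ x', (W ω x' - T (W ω) x') ^ 2 ∂μ) ∂P ∧
    (∫ x', (S 0 x' - f x') ^ 2 ∂μ)
      ≤ ∫ ω, (∫ x', (S (W ω) x' - f x') ^ 2 ∂μ) ∂P := by
  classical
  -- integrability of continuous maps on compact finite-measure space
  have hint : ∀ h : C(Ω, ℝ), Integrable (fun x' => h x') μ := fun h =>
    h.continuous.integrable_of_hasCompactSupport (IsClosed.isCompact (isClosed_tsupport _))
  -- integration as a continuous linear functional
  let I : C(Ω, ℝ) →L[ℝ] ℝ :=
    LinearMap.mkContinuous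
      { toFun := fun h => ∫ x', h x' ∂μ
        map_add' := fun h g => by
          simp only [ContinuousMap.add_apply]
          exact integral_add (hint h) (hint g)
        map_smul' := fun c h => by
          simp only [ContinuousMap.smul_apply, smul_eq_mul, RingHom.id_apply]
          rw [integral_const_mul] }
      (μ Set.univ).toReal
      (fun h => by
        simp only [LinearMap.coe_mk, AddHom.coe_mk]
        calc ‖∫ x', h x' ∂μ‖ ≤ ∫ x', ‖h x'‖ ∂μ := norm_integral_le_integral_norm _
          _ ≤ ∫ _x', ‖h‖ ∂μ := by
              exact integral_mono (hint h).norm (integrable_const _)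
                (fun x' => h.norm_coe_le_norm x')
          _ = (μ Set.univ).toReal * ‖h‖ := by rw [integral_const]; simp [smul_eq_mul, Measure.real])
  have hI : ∀ h : C(Ω, ℝ), I h = ∫ x', h x' ∂μ := fun _ => rfl
  -- the kernel sections
  let κ : Fin n → C(Ω, ℝ) := fun i =>
    ⟨fun x' => k x' (x i), hk.comp (continuous_id.prodMk continuous_const)⟩
  -- T as a continuous linear map
  let Tc : C(Ω, ℝ) →L[ℝ] C(Ω, ℝ) :=
    ∑ i, ∑ j, (G⁻¹ i j) • (ContinuousMap.evalCLM ℝ (x j)).smulRight (κ i)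
  have hTc : ∀ (g : C(Ω, ℝ)) (x' : Ω), Tc g x' = T g x' := by
    intro g x'
    rw [hT]
    simp only [Tc, ContinuousLinearMap.coe_sum', Finset.sum_apply,
      ContinuousLinearMap.coe_smul', Pi.smul_apply, ContinuousLinearMap.smulRight_apply,
      ContinuousMap.coe_sum, ContinuousMap.coe_smul, Finset.sum_apply, Pi.smul_apply,
      ContinuousMap.smul_apply, smul_eq_mul]
    refine Finset.sum_congr rfl fun i _ => Finset.sum_congr rfl fun j _ => ?_
    show G⁻¹ i j * (g (x j) * κ i x') = _
    simp only [κ, ContinuousMap.coe_mk]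
    ring
  let M : C(Ω, ℝ) →L[ℝ] C(Ω, ℝ) := ContinuousLinearMap.id ℝ _ - Tc
  have hM : ∀ (g : C(Ω, ℝ)) (x' : Ω), M g x' = g x' - T g x' := by
    intro g x'
    simp only [M, ContinuousLinearMap.sub_apply, ContinuousLinearMap.id_apply,
      ContinuousMap.sub_apply, hTc]
  -- the zero-initialization residual
  let a : C(Ω, ℝ) :=
    ⟨fun x' => S 0 x' - f x', by
      have : (fun x' => S 0 x' - f x') =
          fun x' => (0 : ℝ) + (∑ i, ∑ j, k x' (x i) * G⁻¹ i j * (f (x j) - 0)) - f x' := by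
        funext x'; rw [hS]; simp
      rw [this]
      exact ((continuous_const.add (continuous_finset_sum _ fun i _ =>
        continuous_finset_sum _ fun j _ =>
          (((hk.comp (continuous_id.prodMk continuous_const)).mul continuous_const).mul
            continuous_const))).sub hf)⟩
  have ha : ∀ x', a x' = S 0 x' - f x' := fun _ => rfl
  -- key pointwise decomposition
  have key : ∀ (g : C(Ω, ℝ)) (x' : Ω), S g x' - f x' = a x' + M g x' := by
    intro g x'
    rw [ha, hM, hS, hS, hT]
    simp only [ContinuousMap.zero_apply, sub_zero, zero_add, mul_sub, Finset.sum_sub_distrib]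
    ring
  -- cross-term functional
  let Λ : C(Ω, ℝ) →L[ℝ] ℝ := (I.comp (ContinuousLinearMap.mul ℝ C(Ω, ℝ) a)).comp M
  have hΛ : ∀ g : C(Ω, ℝ), Λ g = ∫ x', a x' * M g x' ∂μ := fun g => rfl
  -- L² expansion for each g
  have expand : ∀ g : C(Ω, ℝ), (∫ x', (S g x' - f x') ^ 2 ∂μ)
      = (∫ x', (a x') ^ 2 ∂μ) + 2 * Λ g + I (M g * M g) := by
    intro g
    have e1 : ∀ x', (S g x' - f x') ^ 2
        = (a x') ^ 2 + 2 * (a x' * M g x') + (M g * M g) x' := by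
      intro x'; rw [key g x']; simp only [ContinuousMap.mul_apply]; ring
    rw [integral_congr_ae (Filter.Eventually.of_forall e1)]
    have i1 : Integrable (fun x' => (a x') ^ 2) μ :=
      (hint (a * a)).congr (by filter_upwards with x'; simp [ContinuousMap.mul_apply, sq])
    have i2 : Integrable (fun x' => 2 * (a x' * M g x')) μ :=
      ((hint (a * M g)).congr (by
        filter_upwards with x'; simp [ContinuousMap.mul_apply])).const_mul 2
    have i3 : Integrable (fun x' => (M g * M g) x') μ := hint _
    have i12 : Integrable (fun x' => (a x') ^ 2 + 2 * (a x' * M g x')) μ := i1.add i2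
    rw [integral_add i12 i3, integral_add i1 i2, integral_const_mul]
    rw [hΛ, hI]
  -- expectation of the cross term vanishes
  have hcross : (∫ ω, Λ (W ω) ∂P) = 0 := by
    rw [ContinuousLinearMap.integral_comp_comm Λ hWint, hWmean, map_zero]
  -- measurability / integrability over P
  have hWm : AEStronglyMeasurable W P := hWint.aestronglyMeasurable
  have hΛint : Integrable (fun ω => Λ (W ω)) P := Λ.integrable_comp hWint
  have hΦcont : Continuous fun h : C(Ω, ℝ) => I (M h * M h) :=
    I.continuous.comp ((M.continuous.mul M.continuous))
  have hΦnonneg : ∀ h : C(Ω, ℝ), 0 ≤ I (M h * M h) := by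
    intro h
    rw [hI]
    exact integral_nonneg fun x' => by simp [ContinuousMap.mul_apply, mul_self_nonneg]
  have hΦbound : ∀ h : C(Ω, ℝ),
      ‖I (M h * M h)‖ ≤ ((μ Set.univ).toReal * ‖M‖ ^ 2) * ‖h‖ ^ 2 := by
    intro h
    rw [Real.norm_eq_abs, abs_of_nonneg (hΦnonneg h), hI]
    calc (∫ x', (M h * M h) x' ∂μ) ≤ ∫ _x', ‖M h‖ ^ 2 ∂μ := by
          refine integral_mono (hint _) (integrable_const _) fun x' => ?_
          simp only [ContinuousMap.mul_apply]
          calc M h x' * M h x' = |M h x'| ^ 2 := by rw [sq_abs]; ring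
            _ ≤ ‖M h‖ ^ 2 := by
                have := (M h).norm_coe_le_norm x'
                exact pow_le_pow_left₀ (abs_nonneg _) (by simpa [Real.norm_eq_abs] using this) 2
      _ = (μ Set.univ).toReal * ‖M h‖ ^ 2 := by rw [integral_const]; simp [smul_eq_mul, Measure.real]
      _ ≤ ((μ Set.univ).toReal * ‖M‖ ^ 2) * ‖h‖ ^ 2 := by
          rw [mul_assoc, ← mul_pow]
          exact mul_le_mul_of_nonneg_left
            (pow_le_pow_left₀ (norm_nonneg _) (M.le_opNorm h) 2) ENNReal.toReal_nonneg
  have hΦint : Integrable (fun ω => I (M (W ω) * M (W ω))) P := by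
    refine Integrable.mono' (hWsq.const_mul ((μ Set.univ).toReal * ‖M‖ ^ 2))
      (hΦcont.comp_aestronglyMeasurable hWm) ?_
    filter_upwards with ω using hΦbound (W ω)
  -- expand the expectation
  have main : (∫ ω, (∫ x', (S (W ω) x' - f x') ^ 2 ∂μ) ∂P)
      = (∫ x', (a x') ^ 2 ∂μ) + ∫ ω, I (M (W ω) * M (W ω)) ∂P := by
    calc (∫ ω, (∫ x', (S (W ω) x' - f x') ^ 2 ∂μ) ∂P)
        = ∫ ω, ((∫ x', (a x') ^ 2 ∂μ) + 2 * Λ (W ω) + I (M (W ω) * M (W ω))) ∂P := by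
          exact integral_congr_ae (Filter.Eventually.of_forall fun ω => expand (W ω))
      _ = (∫ x', (a x') ^ 2 ∂μ) + 2 * (∫ ω, Λ (W ω) ∂P) + ∫ ω, I (M (W ω) * M (W ω)) ∂P := by
          have j1 : Integrable (fun ω : Ω' => (∫ x', (a x') ^ 2 ∂μ) + 2 * Λ (W ω)) P :=
            (integrable_const _).add (hΛint.const_mul 2)
          rw [integral_add j1 hΦint,
            integral_add (integrable_const _) (hΛint.const_mul 2), integral_const,
            integral_const_mul]
          simp
      _ = (∫ x', (a x') ^ 2 ∂μ) + ∫ ω, I (M (W ω) * M (W ω)) ∂P := by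
          rw [hcross]; ring
  have hS0 : (∫ x', (S 0 x' - f x') ^ 2 ∂μ) = ∫ x', (a x') ^ 2 ∂μ := rfl
  have hB : ∀ ω, (∫ x', (W ω x' - T (W ω) x') ^ 2 ∂μ) = I (M (W ω) * M (W ω)) := by
    intro ω
    rw [hI]
    refine integral_congr_ae (Filter.Eventually.of_forall fun x' => ?_)
    simp only [ContinuousMap.mul_apply, hM]
    ring
  constructor
  · rw [main, hS0]
    congr 1
    exact integral_congr_ae (Filter.Eventually.of_forall fun ω => (hB ω).symm)
  · rw [main, hS0]
    have : 0 ≤ ∫ ω, I (M (W ω) * M (W ω)) ∂P :=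
      integral_nonneg fun ω => hΦnonneg _
    linarith
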